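/- If f ∈ F[V]^P and a1 divides f in F[V], then β divides f in F[V]. -/

import Mathlib

open MvPolynomial
open scoped Classical

/-- The algebra automorphism of `F[a0,a1,a2]` induced by the upper-triangular matrix `σ_c`:
`a0 ↦ a0`, `a1 ↦ a1 + c·a0`, `a2 ↦ a2 + 2c·a1 + c²·a0`.  Here `a_i = X i`. -/
noncomputable def σP (F : Type*) [Field F] (c : F) :
    MvPolynomial (Fin 3) F →ₐ[F] MvPolynomial (Fin 3) F :=
  aeval ![X 0, X 1 + C c * X 0, X 2 + C (2 * c) * X 1 + C (c ^ 2) * X 0]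

/-- The algebra automorphism of `F[a0,a1,a2]` induced by `τ`: `a0 ↦ a2`, `a1 ↦ -a1`, `a2 ↦ a0`. -/
noncomputable def τA (F : Type*) [Field F] :
    MvPolynomial (Fin 3) F →ₐ[F] MvPolynomial (Fin 3) F :=
  aeval ![X 2, -X 1, X 0]


lemma σP_X1 (F : Type*) [Field F] (c : F) :
    σP F c (X 1) = X 1 + C c * X 0 := by simp [σP]

lemma σP_comp (F : Type*) [Field F] (c : F) :
    (σP F c).comp (σP F (-c)) = AlgHom.id F _ := by
  apply MvPolynomial.algHom_ext
  intro i
  fin_cases i <;> simp [σP, map_ofNat] <;> ring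

/-- `σP` as an algebra equivalence. -/
noncomputable def σE (F : Type*) [Field F] (c : F) :
    MvPolynomial (Fin 3) F ≃ₐ[F] MvPolynomial (Fin 3) F :=
  AlgEquiv.ofAlgHom (σP F c) (σP F (-c)) (σP_comp F c)
    (by have := σP_comp F (-c); rwa [neg_neg] at this)

lemma prime_X1 (F : Type*) [Field F] : Prime (X 1 : MvPolynomial (Fin 3) F) := by
  have h0 : Prime (X 0 : MvPolynomial (Fin 3) F) := by
    rw [← MulEquiv.prime_iff (MvPolynomial.finSuccEquiv F 2).toMulEquiv
      (p := (X 0 : MvPolynomial (Fin 3) F)),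
      show ((MvPolynomial.finSuccEquiv F 2).toMulEquiv (X 0)) = Polynomial.X from
        finSuccEquiv_X_zero]
    exact Polynomial.prime_X
  rw [← MulEquiv.prime_iff (MvPolynomial.renameEquiv F (Equiv.swap (0 : Fin 3) 1)).toMulEquiv
      (p := (X 0 : MvPolynomial (Fin 3) F)),
    show ((MvPolynomial.renameEquiv F (Equiv.swap (0 : Fin 3) 1)).toMulEquiv (X 0))
      = X 1 by simp] at h0
  exact h0

lemma prime_factor (F : Type*) [Field F] (c : F) :
    Prime (X 1 + C c * X 0 : MvPolynomial (Fin 3) F) := by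
  have h := (MulEquiv.prime_iff (σE F c).toMulEquiv (p := (X 1 : MvPolynomial (Fin 3) F))).mpr
    (prime_X1 F)
  have : (σE F c).toMulEquiv (X 1) = X 1 + C c * X 0 := σP_X1 F c
  rwa [this] at h

lemma not_assoc_factor (F : Type*) [Field F] {c d : F} (hcd : c ≠ d) :
    ¬ Associated (X 1 + C c * X 0 : MvPolynomial (Fin 3) F) (X 1 + C d * X 0) := by
  intro h
  have hdvd := h.dvd
  have := map_dvd (eval (![1, -c, 0] : Fin 3 → F)) hdvd
  simp only [map_add, map_mul, eval_X, eval_C, Matrix.cons_val_one, Matrix.head_cons,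
    Matrix.cons_val_zero, mul_one] at this
  rw [neg_add_cancel] at this
  have h2 : -c + d = 0 := zero_dvd_iff.mp this
  exact hcd (by linear_combination -h2)

/-- In a `CancelCommMonoidWithZero`, a product of pairwise non-associated primes each
dividing `m` divides `m`. -/
lemma prod_dvd_of_primes {α ι : Type*} [CommMonoidWithZero α] [IsCancelMulZero α] (s : Finset ι)
    (g : ι → α) (m : α) (hp : ∀ i ∈ s, Prime (g i))
    (hna : ∀ i ∈ s, ∀ j ∈ s, i ≠ j → ¬ Associated (g i) (g j))
    (hd : ∀ i ∈ s, g i ∣ m) : (∏ i ∈ s, g i) ∣ m := by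
  classical
  induction s using Finset.induction_on generalizing m with
  | empty => simp
  | @insert a s ha ih =>
    obtain ⟨k, rfl⟩ := hd a (Finset.mem_insert_self a s)
    rw [Finset.prod_insert ha]
    apply mul_dvd_mul_left
    apply ih
    · exact fun i hi => hp i (Finset.mem_insert_of_mem hi)
    · exact fun i hi j hj hij => hna i (Finset.mem_insert_of_mem hi) j
        (Finset.mem_insert_of_mem hj) hij
    · intro i hi
      have hia : i ≠ a := fun h => ha (h ▸ hi)
      have hpi := hp i (Finset.mem_insert_of_mem hi)
      have hpa := hp a (Finset.mem_insert_self a s)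
      have hdi := hd i (Finset.mem_insert_of_mem hi)
      rcases hpi.dvd_or_dvd hdi with h | h
      · exact absurd (hpi.associated_of_dvd hpa h)
          (hna i (Finset.mem_insert_of_mem hi) a (Finset.mem_insert_self a s) hia)
      · exact h

/-- If `f` is `P`-invariant and `a1` divides `f` in `F[V]`, then
`β = ∏_{c∈F_q}(a1 + c·a0)` divides `f` in `F[V]`. -/
theorem beta_dvd_of_a1_dvd (F : Type*) [Field F] (p n q : ℕ) (hp : p.Prime) (hp2 : p ≠ 2)
    [CharP F p] (hn : n ≠ 0) (hq : q = p ^ n)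
    (Fq : Type*) [Field Fq] [Fintype Fq] [Algebra Fq F] (hcard : Fintype.card Fq = q)
    (f : MvPolynomial (Fin 3) F)
    (hinv : ∀ c : Fq, σP F (algebraMap Fq F c) f = f)
    (hdvd : (X 1 : MvPolynomial (Fin 3) F) ∣ f) :
    (∏ c : Fq, (X 1 + C (algebraMap Fq F c) * X 0)) ∣ f := by
  apply prod_dvd_of_primes
  · intro c _; exact prime_factor F _
  · intro c _ d _ hcd
    exact not_assoc_factor F (fun h => hcd ((algebraMap Fq F).injective h))
  · intro c _
    have := map_dvd (σP F (algebraMap Fq F c)) hdvd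
    rwa [hinv c, σP_X1] at this
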